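/- Let n ≥ 1 be a natural number, m ≤ n, and a₀, a₁, …, a_m ∈ ℂ; let S = {j : 1 ≤ j ≤ m and a_j ≠ 0}, and define φ : ℂ → ℂ × ℂ by φ(t) = (t^n, ∑_{j=0}^{m} a_j·t^j). Then the following are equivalent: (i) there exists a finite set F ⊆ ℂ such that φ is injective on ℂ \ F; (ii) the greatest common divisor of n together with all elements of S equals 1 (where for S = ∅ this gcd is n). Moreover, if d := gcd(n, gcd S) > 1 and ζ is a primitive d-th root of unity, then φ(ζ·t) = φ(t) for every t ∈ ℂ. -/

import Mathlib

open Filter Topology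

open Polynomial in
/-- If the gcd condition holds, the parametrization is injective off a finite set. -/
lemma aux_exists_finset_injOn (n m : ℕ) (hn : 1 ≤ n) (hmn : m ≤ n) (a : ℕ → ℂ)
    (h1 : Nat.gcd n (((Finset.Icc 1 m).filter (fun j => a j ≠ 0)).gcd id) = 1) :
    ∃ F : Finset ℂ, Set.InjOn
        (fun t : ℂ => ((t ^ n, ∑ j ∈ Finset.range (m + 1), a j * t ^ j) : ℂ × ℂ))
        ((↑F : Set ℂ)ᶜ) := by
  classical
  set S := (Finset.Icc 1 m).filter (fun j => a j ≠ 0) with hS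
  set P : ℂ → Polynomial ℂ :=
    fun ω => ∑ j ∈ Finset.range (m + 1), C (a j * (ω ^ j - 1)) * X ^ j with hP
  have hPcoeff : ∀ ω : ℂ, ∀ k ∈ Finset.range (m + 1),
      (P ω).coeff k = a k * (ω ^ k - 1) := by
    intro ω k hk
    rw [hP]
    rw [Polynomial.finset_sum_coeff]
    rw [Finset.sum_eq_single k]
    · rw [Polynomial.coeff_C_mul, Polynomial.coeff_X_pow]; simp
    · intro j hj hjk
      rw [Polynomial.coeff_C_mul, Polynomial.coeff_X_pow]
      simp [Ne.symm hjk]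
    · intro h; exact absurd hk h
  have hPne : ∀ ω : ℂ, ω ^ n = 1 → ω ≠ 1 → P ω ≠ 0 := by
    intro ω hωn hω1
    have hord : orderOf ω ∣ n := orderOf_dvd_of_pow_eq_one hωn
    -- there is j ∈ S with ω ^ j ≠ 1
    have : ∃ j ∈ S, ω ^ j ≠ 1 := by
      by_contra hcon
      push_neg at hcon
      have h2 : orderOf ω ∣ S.gcd id := by
        apply Finset.dvd_gcd
        intro j hj
        exact orderOf_dvd_of_pow_eq_one (hcon j hj)
      have : orderOf ω ∣ 1 := h1 ▸ Nat.dvd_gcd hord h2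
      have : orderOf ω = 1 := Nat.dvd_one.mp this
      exact hω1 (orderOf_eq_one_iff.mp this)
    obtain ⟨j₀, hj₀S, hj₀⟩ := this
    have hj₀mem : j₀ ∈ Finset.range (m + 1) := by
      simp only [hS, Finset.mem_filter, Finset.mem_Icc] at hj₀S
      exact Finset.mem_range.mpr (Nat.lt_succ_of_le hj₀S.1.2)
    have ha : a j₀ ≠ 0 := by
      simp only [hS, Finset.mem_filter] at hj₀S; exact hj₀S.2
    intro h
    have := hPcoeff ω j₀ hj₀mem
    rw [h] at this
    simp only [Polynomial.coeff_zero] at this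
    exact (mul_ne_zero ha (sub_ne_zero.mpr hj₀)) this.symm
  refine ⟨((Polynomial.nthRoots n (1 : ℂ)).toFinset).biUnion
      (fun ω => (P ω).roots.toFinset), ?_⟩
  intro s hs t ht heq
  simp only [Set.mem_compl_iff, Finset.mem_coe, Finset.mem_biUnion, not_exists] at hs ht
  simp only [Prod.mk.injEq] at heq
  obtain ⟨h1eq, h2eq⟩ := heq
  rcases eq_or_ne t 0 with rfl | ht0
  · have h0 : s ^ n = 0 := by rw [h1eq, zero_pow (by omega : n ≠ 0)]
    exact pow_eq_zero_iff (by omega : n ≠ 0) |>.mp h0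
  set ω := s / t with hω
  have hωn : ω ^ n = 1 := by
    rw [hω, div_pow, h1eq, div_self (pow_ne_zero n ht0)]
  rcases eq_or_ne ω 1 with hω1 | hω1
  · field_simp [hω] at hω1
    rw [hω] at hω1
    exact (div_eq_one_iff_eq ht0).mp hω1
  · exfalso
    have hst : ω * t = s := div_mul_cancel₀ s ht0
    have heval : (P ω).eval t = 0 := by
      rw [hP]
      simp only [Polynomial.eval_finset_sum, Polynomial.eval_mul, Polynomial.eval_C,
        Polynomial.eval_pow, Polynomial.eval_X]
      have : ∀ j ∈ Finset.range (m + 1),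
          a j * (ω ^ j - 1) * t ^ j = a j * s ^ j - a j * t ^ j := by
        intro j hj
        rw [← hst, mul_pow]; ring
      rw [Finset.sum_congr rfl this, Finset.sum_sub_distrib, h2eq, sub_self]
    refine ht ω ⟨?_, ?_⟩
    · rw [Multiset.mem_toFinset]
      rw [Polynomial.mem_nthRoots (by omega)]
      exact hωn
    · rw [Multiset.mem_toFinset, Polynomial.mem_roots']
      exact ⟨hPne ω hωn hω1, heval⟩

theorem proper_parametrization_iff_gcd_eq_one
    (n m : ℕ) (hn : 1 ≤ n) (hmn : m ≤ n) (a : ℕ → ℂ) :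
    ((∃ F : Finset ℂ, Set.InjOn
        (fun t : ℂ => ((t ^ n, ∑ j ∈ Finset.range (m + 1), a j * t ^ j) : ℂ × ℂ))
        ((↑F : Set ℂ)ᶜ))
      ↔ Nat.gcd n (((Finset.Icc 1 m).filter (fun j => a j ≠ 0)).gcd id) = 1)
    ∧ (∀ ζ : ℂ,
        1 < Nat.gcd n (((Finset.Icc 1 m).filter (fun j => a j ≠ 0)).gcd id) →
        IsPrimitiveRoot ζ (Nat.gcd n (((Finset.Icc 1 m).filter (fun j => a j ≠ 0)).gcd id)) →
        ∀ t : ℂ,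
          ((( ζ * t) ^ n, ∑ j ∈ Finset.range (m + 1), a j * (ζ * t) ^ j) : ℂ × ℂ)
          = ((t ^ n, ∑ j ∈ Finset.range (m + 1), a j * t ^ j) : ℂ × ℂ)) := by
  classical
  set S := (Finset.Icc 1 m).filter (fun j => a j ≠ 0) with hS
  set d := Nat.gcd n (S.gcd id) with hd
  -- key invariance: if ζ^d = 1 then φ(ζt) = φ(t)
  have key : ∀ ζ : ℂ, ζ ^ d = 1 → ∀ t : ℂ,
      (((ζ * t) ^ n, ∑ j ∈ Finset.range (m + 1), a j * (ζ * t) ^ j) : ℂ × ℂ)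
      = ((t ^ n, ∑ j ∈ Finset.range (m + 1), a j * t ^ j) : ℂ × ℂ) := by
    intro ζ hζ t
    have hpow : ∀ k : ℕ, d ∣ k → ζ ^ k = 1 := by
      rintro k ⟨c, rfl⟩
      rw [pow_mul, hζ, one_pow]
    have hζn : ζ ^ n = 1 := hpow n (Nat.gcd_dvd_left _ _)
    have hζj : ∀ j ∈ S, ζ ^ j = 1 := fun j hj =>
      hpow j ((Nat.gcd_dvd_right n (S.gcd id)).trans (Finset.gcd_dvd hj))
    refine Prod.ext ?_ ?_
    · simp [mul_pow, hζn]
    · simp only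
      refine Finset.sum_congr rfl fun j hj => ?_
      rcases eq_or_ne (a j) 0 with h | h
      · simp [h]
      rcases Nat.eq_zero_or_pos j with rfl | hj1
      · simp
      have hjS : j ∈ S := by
        simp only [hS, Finset.mem_filter, Finset.mem_Icc]
        exact ⟨⟨hj1, Nat.lt_succ_iff.mp (Finset.mem_range.mp hj)⟩, h⟩
      rw [mul_pow, hζj j hjS, one_mul]
  have hdpos : 0 < d := Nat.gcd_pos_of_pos_left _ (by omega)
  constructor
  · constructor
    · -- injectivity → gcd = 1
      rintro ⟨F, hF⟩
      by_contra hd1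
      have hd2 : 1 < d := by omega
      obtain ⟨ζ, hζ⟩ : ∃ ζ : ℂ, IsPrimitiveRoot ζ d :=
        ⟨_, Complex.isPrimitiveRoot_exp d (by omega)⟩
      have hζd : ζ ^ d = 1 := hζ.pow_eq_one
      have hζ1 : ζ ≠ 1 := hζ.ne_one hd2
      have hζ0 : ζ ≠ 0 := by
        intro h; rw [h] at hζd; simp [zero_pow (by omega : d ≠ 0)] at hζd
      obtain ⟨t, htmem⟩ := Infinite.exists_notMem_finset
        (F ∪ F.image (fun x => ζ⁻¹ * x) ∪ {0})
      simp only [Finset.mem_union, Finset.mem_image, Finset.mem_singleton, not_or,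
        not_exists] at htmem
      obtain ⟨⟨htF, htF'⟩, ht0⟩ := htmem
      have hζtF : ζ * t ∉ F := by
        intro h
        exact htF' (ζ * t) ⟨h, by field_simp⟩
      have := hF (by simpa using hζtF) (by simpa using htF) (key ζ hζd t)
      have : (ζ - 1) * t = 0 := by linear_combination this
      rcases mul_eq_zero.mp this with h | h
      · exact hζ1 (sub_eq_zero.mp h)
      · exact ht0 h
    · intro h
      exact aux_exists_finset_injOn n m hn hmn a h
  · intro ζ _ hζ t
    exact key ζ hζ.pow_eq_one t
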